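/- Let α ∈ (0,1) and T_α : ℓ¹ → ℓ¹ as defined, and let B_1 = {x ∈ ℓ¹ : ‖x‖_1 ≤ 1}. Then T_α restricted to B_1 is not asymptotically nonexpansive: for every sequence of positive real numbers {λ_n} with λ_n → 0 and every k ≥ 1, there exist x, y ∈ B_1 with x ≠ y such that ‖T_α^k(x) − T_α^k(y)‖_1 > (1 + λ_k)‖x − y‖_1. (Indeed one may take x = (x_0, 0, 0, …) and y = (x_0/4, 0, 0, …) with 0 < x_0 < 4α^{2k}/(9(1+λ_k)²).) -/

import Mathlib

/-- The map `T_α : ℓ¹ → ℓ¹` from Example 1 of the paper, sending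
`x = (x₁, x₂, …)` to `(0, α√|x₁|, α x₂, α x₃, …)` (here `0`-indexed: coordinate `0` of
the image is `0`, coordinate `1` is `α √|x 0|`, and coordinate `n + 2` is `α * x (n + 1)`). -/
noncomputable def Talpha (α : ℝ) (f : lp (fun _ : ℕ => ℝ) 1) : lp (fun _ : ℕ => ℝ) 1 :=
  ⟨fun n => match n with
    | 0 => 0
    | 1 => α * Real.sqrt |f 0|
    | (n + 2) => α * f (n + 1), by
    apply memℓp_gen
    have h1 : Summable fun n : ℕ => ‖(f : ℕ → ℝ) n‖ := by
      have := (memℓp_gen_iff (p := 1) (by norm_num)).1 (lp.memℓp f)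
      simpa using this
    have h2 : Summable fun n : ℕ => ‖(f : ℕ → ℝ) (n + 1)‖ :=
      (summable_nat_add_iff 1).2 h1
    have h3 : Summable fun n : ℕ => |α| * ‖(f : ℕ → ℝ) (n + 1)‖ := h2.mul_left _
    have h4 : Summable fun n : ℕ =>
        ‖(fun n => match n with
          | 0 => (0 : ℝ)
          | 1 => α * Real.sqrt |f 0|
          | (n + 2) => α * f (n + 1)) n‖ := by
      rw [← summable_nat_add_iff 2]
      simpa [abs_mul] using h3
    simpa using h4⟩

lemma Talpha_apply (α : ℝ) (f : lp (fun _ : ℕ => ℝ) 1) (n : ℕ) :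
    (Talpha α f) n = match n with
      | 0 => (0 : ℝ)
      | 1 => α * Real.sqrt |f 0|
      | (n + 2) => α * f (n + 1) := rfl

lemma lp_single_apply (i : ℕ) (a : ℝ) (j : ℕ) :
    (lp.single 1 i a : lp (fun _ : ℕ => ℝ) 1) j = if j = i then a else 0 := by
  rw [lp.single_apply]
  split_ifs with h
  · subst h; exact Pi.single_eq_same _ _
  · exact Pi.single_eq_of_ne h _

lemma norm_lp_single (i : ℕ) (a : ℝ) :
    ‖(lp.single 1 i a : lp (fun _ : ℕ => ℝ) 1)‖ = |a| := by
  have := lp.norm_single (E := fun _ : ℕ => ℝ) (p := 1) (by norm_num) i a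
  simpa using this

lemma Talpha_single_zero (α : ℝ) (c : ℝ) (hc : 0 ≤ c) :
    Talpha α (lp.single 1 0 c) = lp.single 1 1 (α * Real.sqrt c) := by
  apply lp.ext
  funext n
  rw [Talpha_apply]
  match n with
  | 0 => simp [lp_single_apply]
  | 1 => simp [lp_single_apply, abs_of_nonneg hc]
  | (m + 2) => simp [lp_single_apply]

lemma Talpha_single_succ (α : ℝ) (m : ℕ) (b : ℝ) :
    Talpha α (lp.single 1 (m + 1) b) = lp.single 1 (m + 2) (α * b) := by
  apply lp.ext
  funext n
  rw [Talpha_apply]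
  match n with
  | 0 => simp [lp_single_apply]
  | 1 => simp [lp_single_apply]
  | (j + 2) =>
    simp only [lp_single_apply]
    by_cases h : j = m
    · subst h; simp
    · rw [if_neg (by omega), if_neg (by omega), mul_zero]

lemma Talpha_iterate (α : ℝ) (c : ℝ) (hc : 0 ≤ c) (k : ℕ) (hk : 1 ≤ k) :
    (Talpha α)^[k] (lp.single 1 0 c) = lp.single 1 k (α ^ k * Real.sqrt c) := by
  induction k with
  | zero => omega
  | succ k ih =>
    rcases Nat.eq_or_lt_of_le hk with h | h
    · rw [← h]
      simpa [pow_one] using Talpha_single_zero α c hc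
    · have hk1 : 1 ≤ k := by omega
      obtain ⟨m, rfl⟩ : ∃ m, k = m + 1 := ⟨k - 1, by omega⟩
      rw [Function.iterate_succ_apply', ih hk1, Talpha_single_succ]
      ring_nf

lemma single_sub (i : ℕ) (a b : ℝ) :
    (lp.single 1 i a : lp (fun _ : ℕ => ℝ) 1) - lp.single 1 i b = lp.single 1 i (a - b) := by
  apply lp.ext
  funext n
  simp only [lp.coeFn_sub, Pi.sub_apply, lp_single_apply]
  split_ifs <;> simp

open Filter in
/-- `T_α` restricted to the closed unit ball `B₁` of `ℓ¹` is not
asymptotically nonexpansive: for every sequence of positive reals `lam` with `lam → 0`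
and every `k ≥ 1`, there are `x, y ∈ B₁`, `x ≠ y`, with
`‖T_α^k x - T_α^k y‖₁ > (1 + lam k) ‖x - y‖₁`. -/
theorem stmt18 (α : ℝ) (hα : α ∈ Set.Ioo (0 : ℝ) 1) :
    ∀ lam : ℕ → ℝ, (∀ n, 0 < lam n) → Tendsto lam atTop (nhds 0) →
      ∀ k : ℕ, 1 ≤ k →
        ∃ x : lp (fun _ : ℕ => ℝ) 1, ‖x‖ ≤ 1 ∧
        ∃ y : lp (fun _ : ℕ => ℝ) 1, ‖y‖ ≤ 1 ∧ x ≠ y ∧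
          (1 + lam k) * ‖x - y‖ < ‖(Talpha α)^[k] x - (Talpha α)^[k] y‖ := by
  intro lam hlam _ k hk
  obtain ⟨hα0, hα1⟩ := hα
  set L : ℝ := 1 + lam k with hL
  have hL1 : 1 ≤ L := by have := hlam k; simp [hL]; linarith
  have hL0 : 0 < L := by linarith
  have hαk : 0 < α ^ k := pow_pos hα0 k
  have hαk1 : α ^ k ≤ 1 := pow_le_one₀ hα0.le hα1.le
  set s : ℝ := α ^ k / (3 * L) with hs
  have hs0 : 0 < s := by positivity
  have hs3 : s ≤ 1 / 3 := by
    rw [hs, div_le_div_iff₀ (by positivity) (by norm_num)]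
    nlinarith
  set c : ℝ := s ^ 2 with hc
  have hc0 : 0 < c := by positivity
  have hsqc : Real.sqrt c = s := by
    rw [hc, Real.sqrt_sq hs0.le]
  have hc1 : c ≤ 1 := by nlinarith
  refine ⟨lp.single 1 0 c, ?_, lp.single 1 0 (c / 4), ?_, ?_, ?_⟩
  · rw [norm_lp_single, abs_of_nonneg hc0.le]; exact hc1
  · rw [norm_lp_single, abs_of_nonneg (by positivity)]; linarith
  · intro h
    have := congrArg (fun f : lp (fun _ : ℕ => ℝ) 1 => f 0) h
    simp only [lp_single_apply, if_pos rfl] at this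
    simp at this
    linarith
  · rw [Talpha_iterate α c hc0.le k hk, Talpha_iterate α (c / 4) (by positivity) k hk,
      single_sub, single_sub, norm_lp_single, norm_lp_single]
    have hsq4 : Real.sqrt (c / 4) = s / 2 := by
      rw [show c / 4 = (s / 2) ^ 2 by ring, Real.sqrt_sq (by linarith)]
    rw [hsqc, hsq4]
    have e1 : α ^ k * s - α ^ k * (s / 2) = α ^ k * s / 2 := by ring
    rw [← mul_sub, show s - s / 2 = s / 2 by ring]
    rw [abs_of_nonneg (by nlinarith), abs_of_nonneg (by nlinarith)]
    have : L * (c - c / 4) = 3 / 4 * L * s ^ 2 := by rw [hc]; ring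
    rw [show c - c / 4 = 3 / 4 * c by ring, hc]
    have : 3 / 4 * L * s = α ^ k / 4 := by rw [hs]; field_simp
    calc L * (3 / 4 * s ^ 2) = (3 / 4 * L * s) * s := by ring
      _ = α ^ k / 4 * s := by rw [this]
      _ < α ^ k * (s / 2) := by nlinarith
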